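/- For any r > 0, the function f_r(b) = b·(2^{r/b} − 1) is strictly convex on (0, ∞). -/

import Mathlib

/-- For any `r > 0`, the function `f_r(b) = b·(2^{r/b} − 1)` is strictly
convex on `(0, ∞)`. -/
theorem min_power_strictConvexOn (r : ℝ) (hr : 0 < r) :
    StrictConvexOn ℝ (Set.Ioi 0) (fun b : ℝ => b * ((2 : ℝ) ^ (r / b) - 1)) := by
  have hlog2 : 0 < Real.log 2 := Real.log_pos one_lt_two
  set c : ℝ := Real.log 2 * r with hc
  have hcpos : 0 < c := mul_pos hlog2 hr
  have hfe : (fun b : ℝ => b * ((2 : ℝ) ^ (r / b) - 1))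
      = fun b : ℝ => b * (Real.exp (c * b⁻¹) - 1) := by
    funext b
    rw [Real.rpow_def_of_pos two_pos]
    ring_nf
    rw [hc]
    ring_nf
  rw [hfe]
  set F : ℝ → ℝ := fun b : ℝ => b * (Real.exp (c * b⁻¹) - 1) with hF
  set G : ℝ → ℝ := fun b : ℝ => Real.exp (c * b⁻¹) * (1 - c * b⁻¹) - 1 with hG
  have hF' : ∀ b : ℝ, b ≠ 0 → HasDerivAt F (G b) b := by
    intro b hb
    have h1 : HasDerivAt (fun x : ℝ => Real.exp (c * x⁻¹))
        (Real.exp (c * b⁻¹) * (c * -(b ^ 2)⁻¹)) b :=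
      (((hasDerivAt_inv hb).const_mul c).exp)
    have h3 := (hasDerivAt_id b).mul (h1.sub_const 1)
    refine h3.congr_deriv ?_
    simp only [hG, id]
    field_simp
    ring
  have hG' : ∀ b : ℝ, b ≠ 0 → HasDerivAt G (Real.exp (c * b⁻¹) * (c ^ 2 * (b ^ 3)⁻¹)) b := by
    intro b hb
    have h1 : HasDerivAt (fun x : ℝ => Real.exp (c * x⁻¹))
        (Real.exp (c * b⁻¹) * (c * -(b ^ 2)⁻¹)) b :=
      (((hasDerivAt_inv hb).const_mul c).exp)
    have h2 : HasDerivAt (fun x : ℝ => 1 - c * x⁻¹) (-(c * -(b ^ 2)⁻¹)) b :=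
      ((hasDerivAt_inv hb).const_mul c).const_sub 1
    have h3 := (h1.mul h2).sub_const 1
    refine h3.congr_deriv ?_
    field_simp
    ring
  apply StrictConvexOn.subset ?_ (le_refl _) (convex_Ioi 0)
  apply strictConvexOn_of_deriv2_pos (convex_Ioi 0)
  · intro x hx
    exact (hF' x (ne_of_gt hx)).continuousAt.continuousWithinAt
  · intro x hx
    rw [interior_Ioi] at hx
    have hev : deriv F =ᶠ[nhds x] G := by
      filter_upwards [Ioi_mem_nhds hx] with y hy
      exact (hF' y (ne_of_gt hy)).deriv
    show 0 < deriv (deriv F) x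
    rw [hev.deriv_eq, (hG' x (ne_of_gt hx)).deriv]
    exact mul_pos (Real.exp_pos _) (mul_pos (pow_pos hcpos 2) (inv_pos.2 (pow_pos hx 3)))
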